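/- The graph of lines of a nontrivial finite projective rectangle has diameter exactly 2; the graph of lines of a trivial projective rectangle (projective plane) is a complete graph. -/

import Mathlib

open scoped Classical

/-- A projective rectangle: an incidence structure satisfying axioms (A1)–(A6). -/
structure ProjRect (P L : Type*) where
  incid : P → L → Prop
  /-- (A4) the special point -/
  D : P
  /-- (A1) every two distinct points are incident with exactly one line -/
  A1 : ∀ p q : P, p ≠ q → ∃! l : L, incid p l ∧ incid q l
  /-- (A2) there exist four points with no three collinear -/
  A2 : ∃ p1 p2 p3 p4 : P, p1 ≠ p2 ∧ p1 ≠ p3 ∧ p1 ≠ p4 ∧ p2 ≠ p3 ∧ p2 ≠ p4 ∧ p3 ≠ p4 ∧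
    ∀ l : L, ¬(incid p1 l ∧ incid p2 l ∧ incid p3 l) ∧ ¬(incid p1 l ∧ incid p2 l ∧ incid p4 l) ∧
      ¬(incid p1 l ∧ incid p3 l ∧ incid p4 l) ∧ ¬(incid p2 l ∧ incid p3 l ∧ incid p4 l)
  /-- (A3) every line has at least three points -/
  A3 : ∀ l : L, ∃ p1 p2 p3 : P, p1 ≠ p2 ∧ p1 ≠ p3 ∧ p2 ≠ p3 ∧
    incid p1 l ∧ incid p2 l ∧ incid p3 l
  /-- (A5) each special line intersects every other line in exactly one point -/
  A5 : ∀ s l : L, incid D s → l ≠ s → ∃! p : P, incid p s ∧ incid p l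
  /-- (A6) Pasch-type axiom -/
  A6 : ∀ l1 l2 g h : L, ¬incid D l1 → ¬incid D l2 → (∃ p : P, incid p l1 ∧ incid p l2) →
    (∃ p1 p2 p3 p4 : P, p1 ≠ p2 ∧ p1 ≠ p3 ∧ p1 ≠ p4 ∧ p2 ≠ p3 ∧ p2 ≠ p4 ∧ p3 ≠ p4 ∧
      incid p1 g ∧ incid p1 l1 ∧ incid p2 g ∧ incid p2 l2 ∧
      incid p3 h ∧ incid p3 l1 ∧ incid p4 h ∧ incid p4 l2) →
    ∃ p : P, incid p g ∧ incid p h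

namespace ProjRect

variable {P L : Type*} (R : ProjRect P L)

/-- A line is special if it is incident with the special point `D`. -/
def SpecialLine (l : L) : Prop := R.incid R.D l

/-- A line is ordinary if it is not incident with `D`. -/
def OrdinaryLine (l : L) : Prop := ¬ R.incid R.D l

/-- A point is ordinary if it is not `D`. -/
def OrdinaryPoint (p : P) : Prop := p ≠ R.D

/-- The set of points of a line. -/
def points (l : L) : Set P := {p | R.incid p l}

/-- `R` has order `(m, n)`: there are `m+1` special lines, each with `n+1` points. -/
def HasOrder (m n : ℕ) : Prop :=
  {l : L | R.SpecialLine l}.ncard = m + 1 ∧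
  ∀ l : L, R.SpecialLine l → (R.points l).ncard = n + 1

/-- Nontrivial: there exist two disjoint ordinary lines (i.e. `R` is not a projective plane). -/
def Nontrivial : Prop :=
  ∃ l1 l2 : L, R.OrdinaryLine l1 ∧ R.OrdinaryLine l2 ∧ ∀ p : P, ¬(R.incid p l1 ∧ R.incid p l2)

/-- An incidence substructure `(Ps, Ls)` that is a projective plane. -/
def IsSubplane (Ps : Set P) (Ls : Set L) : Prop :=
  (∀ p ∈ Ps, ∀ q ∈ Ps, p ≠ q → ∃! l : L, l ∈ Ls ∧ R.incid p l ∧ R.incid q l) ∧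
  (∀ l ∈ Ls, ∀ l' ∈ Ls, l ≠ l' → ∃! p : P, p ∈ Ps ∧ R.incid p l ∧ R.incid p l') ∧
  (∀ l ∈ Ls, ∀ p : P, R.incid p l → p ∈ Ps) ∧
  (∃ p1 ∈ Ps, ∃ p2 ∈ Ps, ∃ p3 ∈ Ps, ∃ p4 ∈ Ps,
    p1 ≠ p2 ∧ p1 ≠ p3 ∧ p1 ≠ p4 ∧ p2 ≠ p3 ∧ p2 ≠ p4 ∧ p3 ≠ p4 ∧
    ∀ l ∈ Ls, ¬(R.incid p1 l ∧ R.incid p2 l ∧ R.incid p3 l) ∧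
      ¬(R.incid p1 l ∧ R.incid p2 l ∧ R.incid p4 l) ∧
      ¬(R.incid p1 l ∧ R.incid p3 l ∧ R.incid p4 l) ∧
      ¬(R.incid p2 l ∧ R.incid p3 l ∧ R.incid p4 l))

/-- A plane: a maximal subplane. -/
def IsPlane (Ps : Set P) (Ls : Set L) : Prop :=
  R.IsSubplane Ps Ls ∧
  ∀ Ps' Ls', R.IsSubplane Ps' Ls' → Ps ⊆ Ps' → Ls ⊆ Ls' → Ps = Ps' ∧ Ls = Ls'

/-- The graph of lines: vertices are the ordinary lines, adjacent iff they intersect. -/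
def lineGraph : SimpleGraph {l : L // R.OrdinaryLine l} where
  Adj l1 l2 := l1 ≠ l2 ∧ ∃ p : P, R.incid p l1.1 ∧ R.incid p l2.1
  symm := by
    constructor
    rintro a b ⟨hne, p, h1, h2⟩
    exact ⟨hne.symm, p, h2, h1⟩
  loopless := by
    constructor
    rintro a ⟨hne, -⟩
    exact hne rfl

end ProjRect

namespace ProjRect

/-- Key lemma: any two ordinary lines not meeting are joined by an ordinary line. -/
lemma exists_connector {P L : Type*} (R : ProjRect P L) (l1 l2 : L)
    (h1 : R.OrdinaryLine l1) (h2 : R.OrdinaryLine l2)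
    (hdisj : ∀ p : P, ¬(R.incid p l1 ∧ R.incid p l2)) :
    ∃ g : L, R.OrdinaryLine g ∧ (∃ p, R.incid p g ∧ R.incid p l1) ∧
      (∃ q, R.incid q g ∧ R.incid q l2) := by
  obtain ⟨q1, -, -, -, -, -, hq1, -, -⟩ := R.A3 l2
  have hq1D : q1 ≠ R.D := fun e => h2 (e ▸ hq1)
  -- special line through D and q1
  obtain ⟨s, ⟨hDs, hq1s⟩, hsu⟩ := R.A1 R.D q1 (Ne.symm hq1D)
  -- s meets l1 in at most one point
  have hs1 : ∀ a b : P, R.incid a s → R.incid a l1 → R.incid b s → R.incid b l1 → a = b := by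
    intro a b has hal hbs hbl
    by_contra hab
    obtain ⟨t, -, htu⟩ := R.A1 a b hab
    have hst : s = t := htu s ⟨has, hbs⟩
    have hlt : l1 = t := htu l1 ⟨hal, hbl⟩
    exact h1 (hlt ▸ hst ▸ hDs)
  obtain ⟨r1, r2, r3, h12, h13, h23, hr1, hr2, hr3⟩ := R.A3 l1
  -- pick a point of l1 not on s
  have : ∃ p1, R.incid p1 l1 ∧ ¬ R.incid p1 s := by
    by_contra hc
    push_neg at hc
    exact h12 (hs1 r1 r2 (hc r1 hr1) hr1 (hc r2 hr2) hr2)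
  obtain ⟨p1, hp1l, hp1s⟩ := this
  have hp1q1 : p1 ≠ q1 := fun e => hdisj p1 ⟨hp1l, e ▸ hq1⟩
  obtain ⟨g, ⟨hp1g, hq1g⟩, hgu⟩ := R.A1 p1 q1 hp1q1
  refine ⟨g, ?_, ⟨p1, hp1g, hp1l⟩, ⟨q1, hq1g, hq1⟩⟩
  intro hDg
  exact hp1s ((hsu g ⟨hDg, hq1g⟩) ▸ hp1g)

end ProjRect

/-- The graph of lines of a nontrivial finite projective rectangle has diameter
exactly 2; for a trivial projective rectangle (projective plane) it is a complete graph. -/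
theorem stmt12 {P L : Type*} [Fintype P] [Fintype L] (R : ProjRect P L) (m n : ℕ)
    (h : R.HasOrder m n) :
    (R.Nontrivial →
      (∀ u v : {l : L // R.OrdinaryLine l}, (R.lineGraph).dist u v ≤ 2) ∧
      (∃ u v : {l : L // R.OrdinaryLine l}, (R.lineGraph).dist u v = 2)) ∧
    (¬R.Nontrivial →
      ∀ u v : {l : L // R.OrdinaryLine l}, u ≠ v → (R.lineGraph).Adj u v) := by
    classical
  have common : ∀ u v : {l : L // R.OrdinaryLine l},
      (∀ p : P, ¬(R.incid p u.1 ∧ R.incid p v.1)) →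
      ∃ g : {l : L // R.OrdinaryLine l}, R.lineGraph.Adj u g ∧ R.lineGraph.Adj g v := by
    intro u v hdisj
    obtain ⟨g, hg, ⟨p, hpg, hpu⟩, ⟨q, hqg, hqv⟩⟩ :=
      R.exists_connector u.1 v.1 u.2 v.2 hdisj
    have hgu : (⟨g, hg⟩ : {l : L // R.OrdinaryLine l}) ≠ u := by
      intro e
      have : g = u.1 := congrArg Subtype.val e
      exact hdisj q ⟨this ▸ hqg, hqv⟩
    have hgv : (⟨g, hg⟩ : {l : L // R.OrdinaryLine l}) ≠ v := by
      intro e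
      have : g = v.1 := congrArg Subtype.val e
      exact hdisj p ⟨hpu, this ▸ hpg⟩
    exact ⟨⟨g, hg⟩, ⟨hgu.symm, p, hpu, hpg⟩, ⟨hgv, q, hqg, hqv⟩⟩
  have key : ∀ u v : {l : L // R.OrdinaryLine l}, R.lineGraph.dist u v ≤ 2 := by
    intro u v
    by_cases huv : u = v
    · simp [huv, SimpleGraph.dist_self]
    by_cases hadj : R.lineGraph.Adj u v
    · have := SimpleGraph.dist_le (SimpleGraph.Walk.cons hadj SimpleGraph.Walk.nil)
      simpa using this.trans (by norm_num)
    · have hdisj : ∀ p : P, ¬(R.incid p u.1 ∧ R.incid p v.1) := by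
        intro p hp; exact hadj ⟨huv, p, hp⟩
      obtain ⟨g, h1, h2⟩ := common u v hdisj
      have := SimpleGraph.dist_le
        (SimpleGraph.Walk.cons h1 (SimpleGraph.Walk.cons h2 SimpleGraph.Walk.nil))
      simpa using this
  constructor
  · intro hNT
    refine ⟨key, ?_⟩
    obtain ⟨l1, l2, ho1, ho2, hdisj⟩ := hNT
    set u : {l : L // R.OrdinaryLine l} := ⟨l1, ho1⟩
    set v : {l : L // R.OrdinaryLine l} := ⟨l2, ho2⟩
    have huv : u ≠ v := by
      intro e
      have hl : l1 = l2 := congrArg Subtype.val e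
      obtain ⟨p, -, -, -, -, -, hp, -, -⟩ := R.A3 l1
      exact hdisj p ⟨hp, hl ▸ hp⟩
    have hadj : ¬ R.lineGraph.Adj u v := by
      rintro ⟨-, p, hp1, hp2⟩
      exact hdisj p ⟨hp1, hp2⟩
    obtain ⟨g, h1, h2⟩ := common u v hdisj
    have hreach : R.lineGraph.Reachable u v :=
      ⟨SimpleGraph.Walk.cons h1 (SimpleGraph.Walk.cons h2 SimpleGraph.Walk.nil)⟩
    have hpos := hreach.pos_dist_of_ne huv
    have hne1 : R.lineGraph.dist u v ≠ 1 := by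
      intro e
      exact hadj (SimpleGraph.dist_eq_one_iff_adj.mp e)
    have hle := key u v
    exact ⟨u, v, by omega⟩
  · intro hNT u v huv
    refine ⟨huv, ?_⟩
    by_contra hc
    push_neg at hc
    exact hNT ⟨u.1, v.1, u.2, v.2, fun p hp => hc p hp.1 hp.2⟩
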